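/- Let H₃ be a connected simple graph containing a vertex v with d(v) ≥ 3 that has two pendant paths each of length at least 2: a pendant path v v₂ u₂₁ … u₂t₂ and a pendant path v vℓ … uℓ₁ uℓtℓ (so v₂ has exactly the two neighbors v and u₂₁, all internal vertices of the paths have degree 2, and u₂t₂ and uℓtℓ are pendant vertices). Let w₁w₂ be an edge lying on a cycle of H₃, and let H₄ = H₃ − {vv₂, u₂₁v₂, w₁w₂} + {v₂w₁, v₂w₂, u₂₁uℓtℓ}. Then M₂(H₄) < M₂(H₃). -/

import Mathlib

open scoped Classical

private lemma getVert_mem_support' {V : Type*} {G : SimpleGraph V} {a b : V}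
    (p : G.Walk a b) (i : ℕ) : p.getVert i ∈ p.support := by
  induction p generalizing i with
  | nil => rw [SimpleGraph.Walk.getVert_of_length_le _ (Nat.zero_le i)]; simp
  | cons h q ih =>
    cases i with
    | zero => simp
    | succ n => rw [SimpleGraph.Walk.getVert_cons_succ]; simp [ih n]

private lemma getVert_inj' {V : Type*} {G : SimpleGraph V} {a b : V} {p : G.Walk a b}
    (hp : p.IsPath) {i j : ℕ} (hi : i ≤ p.length) (hj : j ≤ p.length)
    (h : p.getVert i = p.getVert j) : i = j := by
  induction p generalizing i j with
  | nil => simp at hi hj; omega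
  | cons hadj q ih =>
    rw [SimpleGraph.Walk.cons_isPath_iff] at hp
    rw [SimpleGraph.Walk.length_cons] at hi hj
    cases i with
    | zero =>
      cases j with
      | zero => rfl
      | succ m =>
        exfalso
        rw [SimpleGraph.Walk.getVert_zero, SimpleGraph.Walk.getVert_cons_succ] at h
        exact hp.2 (h ▸ getVert_mem_support' q m)
    | succ n =>
      cases j with
      | zero =>
        exfalso
        rw [SimpleGraph.Walk.getVert_zero, SimpleGraph.Walk.getVert_cons_succ] at h
        exact hp.2 (h ▸ getVert_mem_support' q n)
      | succ m =>
        rw [SimpleGraph.Walk.getVert_cons_succ, SimpleGraph.Walk.getVert_cons_succ] at h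
        have := ih hp.1 (by omega) (by omega) h
        omega

private lemma two_le_degree_of_cycle {V : Type*} [Fintype V] {G : SimpleGraph V} {c₀ w : V}
    {c : G.Walk c₀ c₀} (hc : c.IsCycle) (hw : w ∈ c.support) : 2 ≤ G.degree w := by
  classical
  have hc' : (c.rotate w hw).IsCycle := hc.rotate hw
  have hlen : 3 ≤ (c.rotate w hw).length := hc'.three_le_length
  set c' := c.rotate w hw with hc'def
  clear_value c'
  cases c' with
  | nil => exact absurd hc' SimpleGraph.Walk.IsCycle.not_of_nil
  | cons h t =>
    rename_i y
    rw [SimpleGraph.Walk.cons_isCycle_iff] at hc'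
    rw [SimpleGraph.Walk.length_cons] at hlen
    have htlen : 2 ≤ t.length := by omega
    have hb : G.Adj (t.getVert (t.length - 1)) w := by
      have := t.adj_getVert_succ (i := t.length - 1) (by omega)
      rwa [show t.length - 1 + 1 = t.length by omega, t.getVert_length] at this
    have hby : t.getVert (t.length - 1) ≠ t.getVert 0 := by
      intro hEq
      have := getVert_inj' hc'.1 (by omega) (by omega) hEq
      omega
    rw [t.getVert_zero] at hby
    have hsub : ({y, t.getVert (t.length - 1)} : Finset V) ⊆ G.neighborFinset w := by
      intro s hs
      rw [Finset.mem_insert, Finset.mem_singleton] at hs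
      rw [SimpleGraph.mem_neighborFinset]
      rcases hs with rfl | rfl
      · exact h
      · exact hb.symm
    calc 2 = ({y, t.getVert (t.length - 1)} : Finset V).card := by
            rw [Finset.card_insert_of_notMem (by simpa using hby.symm), Finset.card_singleton]
      _ ≤ (G.neighborFinset w).card := Finset.card_le_card hsub
      _ = G.degree w := SimpleGraph.card_neighborFinset_eq_degree ..

private lemma arith_final {S₄ S₃ a b dv du : ℤ} (hS : S₄ ≤ S₃) (ha : 2 ≤ a) (hb : 2 ≤ b)
    (hv : 3 ≤ dv) : S₄ + (2 * a + 2 * b + du * 2) < S₃ + (dv * 2 + du * 2 + a * b) := by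
  nlinarith [mul_nonneg (sub_nonneg.mpr ha) (sub_nonneg.mpr hb)]

/-- The second Zagreb index: the sum over all edges of the product of the
degrees of the two endpoints. -/
noncomputable def zagrebM2 {V : Type*} [Fintype V] (G : SimpleGraph V) : ℕ :=
  ∑ e ∈ G.edgeFinset,
    Sym2.lift ⟨fun x y => G.degree x * G.degree y, fun _ _ => Nat.mul_comm _ _⟩ e

set_option maxHeartbeats 2000000 in
/-- Operation II: `v` has degree at least 3 and two pendant paths `p` and `q`
(each of length at least 2) attached at `v`, meeting only in `v`; all internal
vertices of the paths have degree 2 in `H₃` and the far endpoints are pendant.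
If `w₁w₂` is an edge lying on a cycle of `H₃` (so `w₁, w₂` are off the pendant
paths), `v₂` and `u₂₁` are the second and third vertices of `p`, and `z` is the
pendant endpoint of `q`, then
`H₄ = H₃ - {vv₂, u₂₁v₂, w₁w₂} + {v₂w₁, v₂w₂, u₂₁z}` satisfies `M₂(H₄) < M₂(H₃)`. -/
theorem M2_operationII_lt {V : Type*} [Fintype V] (H₃ : SimpleGraph V)
    (hconn : H₃.Connected) (v x z w₁ w₂ : V)
    (hdeg : 3 ≤ H₃.degree v)
    (p : H₃.Walk v x) (q : H₃.Walk v z)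
    (hp : p.IsPath) (hq : q.IsPath)
    (hplen : 2 ≤ p.length) (hqlen : 2 ≤ q.length)
    (hpx : H₃.degree x = 1) (hqz : H₃.degree z = 1)
    (hpint : ∀ y ∈ p.support, y ≠ v → y ≠ x → H₃.degree y = 2)
    (hqint : ∀ y ∈ q.support, y ≠ v → y ≠ z → H₃.degree y = 2)
    (hmeet : ∀ y, y ∈ p.support → y ∈ q.support → y = v)
    (hcyc : ∃ (c₀ : V) (c : H₃.Walk c₀ c₀), c.IsCycle ∧ s(w₁, w₂) ∈ c.edges)
    (hw₁p : w₁ ∉ p.support) (hw₂p : w₂ ∉ p.support)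
    (hw₁q : w₁ ∉ q.support) (hw₂q : w₂ ∉ q.support)
    (H₄ : SimpleGraph V)
    (hH₄ : H₄ = SimpleGraph.fromEdgeSet
      ((H₃.edgeSet \ {s(v, p.getVert 1), s(p.getVert 2, p.getVert 1), s(w₁, w₂)})
        ∪ {s(p.getVert 1, w₁), s(p.getVert 1, w₂), s(p.getVert 2, z)})) :
    zagrebM2 H₄ < zagrebM2 H₃ := by
  classical
  obtain ⟨c₀, c, hc, hec⟩ := hcyc
  obtain ⟨v₂, hv₂def⟩ : ∃ a, p.getVert 1 = a := ⟨_, rfl⟩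
  obtain ⟨u, hudef⟩ : ∃ a, p.getVert 2 = a := ⟨_, rfl⟩
  obtain ⟨vq, hvqdef⟩ : ∃ a, q.getVert 1 = a := ⟨_, rfl⟩
  obtain ⟨z', hz'def⟩ : ∃ a, q.getVert (q.length - 1) = a := ⟨_, rfl⟩
  rw [hv₂def, hudef] at hH₄
  have h0p : p.getVert 0 = v := p.getVert_zero
  have hlp : p.getVert p.length = x := p.getVert_length
  have h0q : q.getVert 0 = v := q.getVert_zero
  have hlq : q.getVert q.length = z := q.getVert_length
  -- support memberships
  have hv₂p : v₂ ∈ p.support := hv₂def ▸ getVert_mem_support' p 1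
  have hup : u ∈ p.support := hudef ▸ getVert_mem_support' p 2
  have hvqq : vq ∈ q.support := hvqdef ▸ getVert_mem_support' q 1
  have hz'q : z' ∈ q.support := hz'def ▸ getVert_mem_support' q (q.length - 1)
  have hvp : v ∈ p.support := p.start_mem_support
  have hxp : x ∈ p.support := p.end_mem_support
  have hzq : z ∈ q.support := q.end_mem_support
  -- distinctness from path injectivity
  have hne_p : ∀ i j : ℕ, i ≤ p.length → j ≤ p.length → i ≠ j →
      p.getVert i ≠ p.getVert j :=
    fun i j hi hj hij h => hij (getVert_inj' hp hi hj h)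
  have hne_q : ∀ i j : ℕ, i ≤ q.length → j ≤ q.length → i ≠ j →
      q.getVert i ≠ q.getVert j :=
    fun i j hi hj hij h => hij (getVert_inj' hq hi hj h)
  have hvv₂ : v ≠ v₂ := by
    have := hne_p 0 1 (by omega) (by omega) (by omega); rwa [h0p, hv₂def] at this
  have hvu : v ≠ u := by
    have := hne_p 0 2 (by omega) (by omega) (by omega); rwa [h0p, hudef] at this
  have hv₂u : v₂ ≠ u := by
    have := hne_p 1 2 (by omega) (by omega) (by omega); rwa [hv₂def, hudef] at this
  have hv₂x : v₂ ≠ x := by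
    have := hne_p 1 p.length (by omega) le_rfl (by omega); rwa [hv₂def, hlp] at this
  have hvvq : v ≠ vq := by
    have := hne_q 0 1 (by omega) (by omega) (by omega); rwa [h0q, hvqdef] at this
  have hvz' : v ≠ z' := by
    have := hne_q 0 (q.length - 1) (by omega) (by omega) (by omega)
    rwa [h0q, hz'def] at this
  have hvz : v ≠ z := by
    have := hne_q 0 q.length (by omega) le_rfl (by omega); rwa [h0q, hlq] at this
  have hvqz : vq ≠ z := by
    have := hne_q 1 q.length (by omega) le_rfl (by omega); rwa [hvqdef, hlq] at this
  have hz'z : z' ≠ z := by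
    have := hne_q (q.length - 1) q.length (by omega) le_rfl (by omega)
    rwa [hz'def, hlq] at this
  -- cross distinctness
  have hcross : ∀ a, a ∈ p.support → a ≠ v → ∀ b, b ∈ q.support → a ≠ b := by
    intro a hap hav b hbq hab
    exact hav (hmeet a hap (hab ▸ hbq))
  have hv₂vq : v₂ ≠ vq := hcross v₂ hv₂p hvv₂.symm vq hvqq
  have hv₂z' : v₂ ≠ z' := hcross v₂ hv₂p hvv₂.symm z' hz'q
  have hv₂z : v₂ ≠ z := hcross v₂ hv₂p hvv₂.symm z hzq
  have huz' : u ≠ z' := hcross u hup hvu.symm z' hz'q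
  have huz : u ≠ z := hcross u hup hvu.symm z hzq
  -- w-facts
  have hadjw : H₃.Adj w₁ w₂ := H₃.mem_edgeSet.mp (c.edges_subset_edgeSet hec)
  have hw₁w₂ : w₁ ≠ w₂ := hadjw.ne
  have hw₁v : w₁ ≠ v := fun h => hw₁p (by rw [h]; exact hvp)
  have hw₁v₂ : w₁ ≠ v₂ := fun h => hw₁p (by rw [h]; exact hv₂p)
  have hw₁u : w₁ ≠ u := fun h => hw₁p (by rw [h]; exact hup)
  have hw₂v : w₂ ≠ v := fun h => hw₂p (by rw [h]; exact hvp)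
  have hw₂v₂ : w₂ ≠ v₂ := fun h => hw₂p (by rw [h]; exact hv₂p)
  have hw₂u : w₂ ≠ u := fun h => hw₂p (by rw [h]; exact hup)
  have hw₁vq : w₁ ≠ vq := fun h => hw₁q (by rw [h]; exact hvqq)
  have hw₁z' : w₁ ≠ z' := fun h => hw₁q (by rw [h]; exact hz'q)
  have hw₁z : w₁ ≠ z := fun h => hw₁q (by rw [h]; exact hzq)
  have hw₂vq : w₂ ≠ vq := fun h => hw₂q (by rw [h]; exact hvqq)
  have hw₂z' : w₂ ≠ z' := fun h => hw₂q (by rw [h]; exact hz'q)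
  have hw₂z : w₂ ≠ z := fun h => hw₂q (by rw [h]; exact hzq)
  have hdw₁ : 2 ≤ H₃.degree w₁ :=
    two_le_degree_of_cycle hc (c.fst_mem_support_of_mem_edges hec)
  have hdw₂ : 2 ≤ H₃.degree w₂ :=
    two_le_degree_of_cycle hc (c.snd_mem_support_of_mem_edges hec)
  -- adjacencies
  have hadjvv₂ : H₃.Adj v v₂ := by
    have := p.adj_getVert_succ (i := 0) (by omega)
    rwa [h0p, show (0:ℕ)+1 = 1 from rfl, hv₂def] at this
  have hadjv₂u : H₃.Adj v₂ u := by
    have := p.adj_getVert_succ (i := 1) (by omega)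
    rwa [show (1:ℕ)+1 = 2 from rfl, hv₂def, hudef] at this
  have hadjvvq : H₃.Adj v vq := by
    have := q.adj_getVert_succ (i := 0) (by omega)
    rwa [h0q, show (0:ℕ)+1 = 1 from rfl, hvqdef] at this
  have hadjz'z : H₃.Adj z' z := by
    have := q.adj_getVert_succ (i := q.length - 1) (by omega)
    rwa [show q.length - 1 + 1 = q.length by omega, hlq, hz'def] at this
  -- degrees
  have hdv₂ : H₃.degree v₂ = 2 := hpint v₂ hv₂p hvv₂.symm hv₂x
  have hdvq : H₃.degree vq = 2 := hqint vq hvqq hvvq.symm hvqz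
  have hdz' : H₃.degree z' = 2 := hqint z' hz'q hvz'.symm hz'z
  -- neighborhoods
  have hNv₂ : H₃.neighborFinset v₂ = {v, u} := by
    symm
    apply Finset.eq_of_subset_of_card_le
    · intro t ht
      rw [Finset.mem_insert, Finset.mem_singleton] at ht
      rw [SimpleGraph.mem_neighborFinset]
      rcases ht with rfl | rfl
      · exact hadjvv₂.symm
      · exact hadjv₂u
    · rw [SimpleGraph.card_neighborFinset_eq_degree, hdv₂,
        Finset.card_insert_of_notMem (by simpa using hvu), Finset.card_singleton]
  have hNv₂' : ∀ t, H₃.Adj v₂ t ↔ t = v ∨ t = u := by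
    intro t
    rw [← SimpleGraph.mem_neighborFinset, hNv₂, Finset.mem_insert, Finset.mem_singleton]
  have hNz : H₃.neighborFinset z = {z'} := by
    symm
    apply Finset.eq_of_subset_of_card_le
    · intro t ht
      rw [Finset.mem_singleton] at ht
      rw [SimpleGraph.mem_neighborFinset]
      subst ht
      exact hadjz'z.symm
    · rw [SimpleGraph.card_neighborFinset_eq_degree, hqz, Finset.card_singleton]
  have hNz' : ∀ t, H₃.Adj z t ↔ t = z' := by
    intro t
    rw [← SimpleGraph.mem_neighborFinset, hNz, Finset.mem_singleton]
  -- non-adjacencies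
  have hnadjv₂w₁ : ¬ H₃.Adj v₂ w₁ := by
    intro h
    rcases (hNv₂' w₁).mp h with h' | h'
    · exact hw₁v h'
    · exact hw₁u h'
  have hnadjv₂w₂ : ¬ H₃.Adj v₂ w₂ := by
    intro h
    rcases (hNv₂' w₂).mp h with h' | h'
    · exact hw₂v h'
    · exact hw₂u h'
  have hnadjuz : ¬ H₃.Adj u z := fun h => huz' ((hNz' u).mp h.symm)
  have hnadjvz : ¬ H₃.Adj v z := fun h => hvz' ((hNz' v).mp h.symm)
  -- edge set of H₄
  have hE₄ : H₄.edgeSet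
      = (H₃.edgeSet \ {s(v,v₂), s(u,v₂), s(w₁,w₂)}) ∪ {s(v₂,w₁), s(v₂,w₂), s(u,z)} := by
    rw [hH₄, SimpleGraph.edgeSet_fromEdgeSet]
    ext e
    simp only [Set.mem_diff, Set.mem_union, Set.mem_insert_iff, Set.mem_singleton_iff,
      Set.mem_setOf_eq]
    constructor
    · rintro ⟨h, -⟩; exact h
    · intro h
      refine ⟨h, ?_⟩
      rcases h with ⟨hm, -⟩ | rfl | rfl | rfl
      · exact SimpleGraph.not_isDiag_of_mem_edgeSet _ hm
      · rw [Sym2.mem_diagSet, Sym2.mk_isDiag_iff]; exact hw₁v₂.symm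
      · rw [Sym2.mem_diagSet, Sym2.mk_isDiag_iff]; exact hw₂v₂.symm
      · rw [Sym2.mem_diagSet, Sym2.mk_isDiag_iff]; exact huz
  -- adjacency in H₄
  have hA4 : ∀ a b : V, H₄.Adj a b ↔
      ((H₃.Adj a b ∧ s(a,b) ≠ s(v,v₂) ∧ s(a,b) ≠ s(u,v₂) ∧ s(a,b) ≠ s(w₁,w₂)) ∨
        s(a,b) = s(v₂,w₁) ∨ s(a,b) = s(v₂,w₂) ∨ s(a,b) = s(u,z)) := by
    intro a b
    rw [← SimpleGraph.mem_edgeSet, hE₄]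
    simp only [Set.mem_union, Set.mem_diff, Set.mem_insert_iff, Set.mem_singleton_iff,
      SimpleGraph.mem_edgeSet]
    constructor
    · rintro (⟨h, hn⟩ | h)
      · exact Or.inl ⟨h, fun hEq => hn (Or.inl hEq), fun hEq => hn (Or.inr (Or.inl hEq)),
          fun hEq => hn (Or.inr (Or.inr hEq))⟩
      · exact Or.inr h
    · rintro (⟨h, h1, h2, h3⟩ | h)
      · refine Or.inl ⟨h, ?_⟩
        rintro (hEq | hEq | hEq)
        exacts [h1 hEq, h2 hEq, h3 hEq]
      · exact Or.inr h
  -- neighborhoods in H₄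
  have hN4v₂ : H₄.neighborFinset v₂ = {w₁, w₂} := by
    ext t
    rw [SimpleGraph.mem_neighborFinset, hA4, Finset.mem_insert, Finset.mem_singleton]
    constructor
    · rintro (⟨hadj, h1, h2, h3⟩ | h | h | h)
      · exfalso
        rcases (hNv₂' t).mp hadj with rfl | rfl
        · exact h1 Sym2.eq_swap
        · exact h2 Sym2.eq_swap
      · rcases Sym2.eq_iff.mp h with ⟨-, rfl⟩ | ⟨h1, -⟩
        · exact Or.inl rfl
        · exact absurd h1 hw₁v₂.symm
      · rcases Sym2.eq_iff.mp h with ⟨-, rfl⟩ | ⟨h1, -⟩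
        · exact Or.inr rfl
        · exact absurd h1 hw₂v₂.symm
      · exfalso
        rcases Sym2.eq_iff.mp h with ⟨h1, -⟩ | ⟨h1, -⟩
        · exact hv₂u h1
        · exact hv₂z h1
    · rintro (rfl | rfl)
      · exact Or.inr (Or.inl rfl)
      · exact Or.inr (Or.inr (Or.inl rfl))
  have hN4u : H₄.neighborFinset u = insert z ((H₃.neighborFinset u).erase v₂) := by
    ext t
    rw [SimpleGraph.mem_neighborFinset, hA4, Finset.mem_insert, Finset.mem_erase,
      SimpleGraph.mem_neighborFinset]
    constructor
    · rintro (⟨hadj, h1, h2, h3⟩ | h | h | h)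
      · refine Or.inr ⟨?_, hadj⟩
        rintro rfl
        exact h2 rfl
      · exfalso
        rcases Sym2.eq_iff.mp h with ⟨h1, -⟩ | ⟨h1, -⟩
        · exact hv₂u h1.symm
        · exact hw₁u h1.symm
      · exfalso
        rcases Sym2.eq_iff.mp h with ⟨h1, -⟩ | ⟨h1, -⟩
        · exact hv₂u h1.symm
        · exact hw₂u h1.symm
      · rcases Sym2.eq_iff.mp h with ⟨-, rfl⟩ | ⟨h1, -⟩
        · exact Or.inl rfl
        · exact absurd h1 huz
    · rintro (rfl | ⟨htv₂, hadj⟩)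
      · exact Or.inr (Or.inr (Or.inr rfl))
      · left
        refine ⟨hadj, ?_, ?_, ?_⟩
        · intro hEq
          rcases Sym2.eq_iff.mp hEq with ⟨h1, -⟩ | ⟨h1, -⟩
          · exact hvu h1.symm
          · exact hv₂u h1.symm
        · intro hEq
          rcases Sym2.eq_iff.mp hEq with ⟨-, h2⟩ | ⟨h1, -⟩
          · exact htv₂ h2
          · exact hv₂u h1.symm
        · intro hEq
          rcases Sym2.eq_iff.mp hEq with ⟨h1, -⟩ | ⟨h1, -⟩
          · exact hw₁u h1.symm
          · exact hw₂u h1.symm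
  have hN4w₁ : H₄.neighborFinset w₁ = insert v₂ ((H₃.neighborFinset w₁).erase w₂) := by
    ext t
    rw [SimpleGraph.mem_neighborFinset, hA4, Finset.mem_insert, Finset.mem_erase,
      SimpleGraph.mem_neighborFinset]
    constructor
    · rintro (⟨hadj, h1, h2, h3⟩ | h | h | h)
      · refine Or.inr ⟨?_, hadj⟩
        rintro rfl
        exact h3 rfl
      · rcases Sym2.eq_iff.mp h with ⟨h1, -⟩ | ⟨-, rfl⟩
        · exact absurd h1 hw₁v₂
        · exact Or.inl rfl
      · exfalso
        rcases Sym2.eq_iff.mp h with ⟨h1, -⟩ | ⟨h1, -⟩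
        · exact hw₁v₂ h1
        · exact hw₁w₂ h1
      · exfalso
        rcases Sym2.eq_iff.mp h with ⟨h1, -⟩ | ⟨h1, -⟩
        · exact hw₁u h1
        · exact hw₁z h1
    · rintro (rfl | ⟨htw₂, hadj⟩)
      · right; left
        exact Sym2.eq_swap
      · left
        refine ⟨hadj, ?_, ?_, ?_⟩
        · intro hEq
          rcases Sym2.eq_iff.mp hEq with ⟨h1, -⟩ | ⟨h1, -⟩
          · exact hw₁v h1
          · exact hw₁v₂ h1
        · intro hEq
          rcases Sym2.eq_iff.mp hEq with ⟨h1, -⟩ | ⟨h1, -⟩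
          · exact hw₁u h1
          · exact hw₁v₂ h1
        · intro hEq
          rcases Sym2.eq_iff.mp hEq with ⟨-, h2⟩ | ⟨h1, -⟩
          · exact htw₂ h2
          · exact hw₁w₂ h1
  have hN4w₂ : H₄.neighborFinset w₂ = insert v₂ ((H₃.neighborFinset w₂).erase w₁) := by
    ext t
    rw [SimpleGraph.mem_neighborFinset, hA4, Finset.mem_insert, Finset.mem_erase,
      SimpleGraph.mem_neighborFinset]
    constructor
    · rintro (⟨hadj, h1, h2, h3⟩ | h | h | h)
      · refine Or.inr ⟨?_, hadj⟩
        rintro rfl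
        exact h3 Sym2.eq_swap
      · exfalso
        rcases Sym2.eq_iff.mp h with ⟨h1, -⟩ | ⟨h1, -⟩
        · exact hw₂v₂ h1
        · exact hw₁w₂ h1.symm
      · rcases Sym2.eq_iff.mp h with ⟨h1, -⟩ | ⟨-, rfl⟩
        · exact absurd h1 hw₂v₂
        · exact Or.inl rfl
      · exfalso
        rcases Sym2.eq_iff.mp h with ⟨h1, -⟩ | ⟨h1, -⟩
        · exact hw₂u h1
        · exact hw₂z h1
    · rintro (rfl | ⟨htw₁, hadj⟩)
      · right; right; left
        exact Sym2.eq_swap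
      · left
        refine ⟨hadj, ?_, ?_, ?_⟩
        · intro hEq
          rcases Sym2.eq_iff.mp hEq with ⟨h1, -⟩ | ⟨h1, -⟩
          · exact hw₂v h1
          · exact hw₂v₂ h1
        · intro hEq
          rcases Sym2.eq_iff.mp hEq with ⟨h1, -⟩ | ⟨h1, -⟩
          · exact hw₂u h1
          · exact hw₂v₂ h1
        · intro hEq
          rcases Sym2.eq_iff.mp hEq with ⟨h1, -⟩ | ⟨-, h2⟩
          · exact hw₁w₂ h1.symm
          · exact htw₁ h2
  have hN4v : H₄.neighborFinset v = (H₃.neighborFinset v).erase v₂ := by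
    ext t
    rw [SimpleGraph.mem_neighborFinset, hA4, Finset.mem_erase,
      SimpleGraph.mem_neighborFinset]
    constructor
    · rintro (⟨hadj, h1, h2, h3⟩ | h | h | h)
      · refine ⟨?_, hadj⟩
        rintro rfl
        exact h1 rfl
      · exfalso
        rcases Sym2.eq_iff.mp h with ⟨h1, -⟩ | ⟨h1, -⟩
        · exact hvv₂ h1
        · exact hw₁v h1.symm
      · exfalso
        rcases Sym2.eq_iff.mp h with ⟨h1, -⟩ | ⟨h1, -⟩
        · exact hvv₂ h1
        · exact hw₂v h1.symm
      · exfalso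
        rcases Sym2.eq_iff.mp h with ⟨h1, -⟩ | ⟨h1, -⟩
        · exact hvu h1
        · exact hvz h1
    · rintro ⟨htv₂, hadj⟩
      left
      refine ⟨hadj, ?_, ?_, ?_⟩
      · intro hEq
        rcases Sym2.eq_iff.mp hEq with ⟨-, h2⟩ | ⟨h1, -⟩
        · exact htv₂ h2
        · exact hvv₂ h1
      · intro hEq
        rcases Sym2.eq_iff.mp hEq with ⟨h1, -⟩ | ⟨h1, -⟩
        · exact hvu h1
        · exact hvv₂ h1
      · intro hEq
        rcases Sym2.eq_iff.mp hEq with ⟨h1, -⟩ | ⟨h1, -⟩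
        · exact hw₁v h1.symm
        · exact hw₂v h1.symm
  have hN4z : H₄.neighborFinset z = {z', u} := by
    ext t
    rw [SimpleGraph.mem_neighborFinset, hA4, Finset.mem_insert, Finset.mem_singleton]
    constructor
    · rintro (⟨hadj, h1, h2, h3⟩ | h | h | h)
      · exact Or.inl ((hNz' t).mp hadj)
      · exfalso
        rcases Sym2.eq_iff.mp h with ⟨h1, -⟩ | ⟨h1, -⟩
        · exact hv₂z h1.symm
        · exact hw₁z h1.symm
      · exfalso
        rcases Sym2.eq_iff.mp h with ⟨h1, -⟩ | ⟨h1, -⟩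
        · exact hv₂z h1.symm
        · exact hw₂z h1.symm
      · rcases Sym2.eq_iff.mp h with ⟨h1, -⟩ | ⟨-, rfl⟩
        · exact absurd h1 huz.symm
        · exact Or.inr rfl
    · rintro (rfl | rfl)
      · left
        refine ⟨hadjz'z.symm, ?_, ?_, ?_⟩
        · intro hEq
          rcases Sym2.eq_iff.mp hEq with ⟨h1, -⟩ | ⟨h1, -⟩
          · exact hvz h1.symm
          · exact hv₂z h1.symm
        · intro hEq
          rcases Sym2.eq_iff.mp hEq with ⟨h1, -⟩ | ⟨h1, -⟩
          · exact huz h1.symm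
          · exact hv₂z h1.symm
        · intro hEq
          rcases Sym2.eq_iff.mp hEq with ⟨h1, -⟩ | ⟨h1, -⟩
          · exact hw₁z h1.symm
          · exact hw₂z h1.symm
      · exact Or.inr (Or.inr (Or.inr Sym2.eq_swap))
  -- degrees in H₄
  have hd4z : H₄.degree z = 2 := by
    rw [← SimpleGraph.card_neighborFinset_eq_degree, hN4z,
      Finset.card_insert_of_notMem (by simpa using huz'.symm), Finset.card_singleton]
  have hd4v : (H₄.degree v : ℤ) = (H₃.degree v : ℤ) - 1 := by
    have h1 : v₂ ∈ H₃.neighborFinset v := by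
      rw [SimpleGraph.mem_neighborFinset]; exact hadjvv₂
    have h2 : 1 ≤ (H₃.neighborFinset v).card := Finset.card_pos.mpr ⟨v₂, h1⟩
    rw [← SimpleGraph.card_neighborFinset_eq_degree, ← SimpleGraph.card_neighborFinset_eq_degree,
      hN4v, Finset.card_erase_of_mem h1, Nat.cast_sub h2, Nat.cast_one]
  have hd4 : ∀ y, y ≠ v → y ≠ z → H₄.degree y = H₃.degree y := by
    intro y hyv hyz
    by_cases h1 : y = v₂
    · subst h1
      rw [← SimpleGraph.card_neighborFinset_eq_degree,
        ← SimpleGraph.card_neighborFinset_eq_degree, hN4v₂, hNv₂,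
        Finset.card_insert_of_notMem (by simpa using hw₁w₂), Finset.card_singleton,
        Finset.card_insert_of_notMem (by simpa using hvu), Finset.card_singleton]
    by_cases h2 : y = u
    · subst h2
      have hv₂mem : v₂ ∈ H₃.neighborFinset y := by
        rw [SimpleGraph.mem_neighborFinset]; exact hadjv₂u.symm
      have hcard : 1 ≤ (H₃.neighborFinset y).card := Finset.card_pos.mpr ⟨v₂, hv₂mem⟩
      have hznm : z ∉ (H₃.neighborFinset y).erase v₂ := by
        simp only [Finset.mem_erase, SimpleGraph.mem_neighborFinset]
        rintro ⟨-, hadj⟩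
        exact hnadjuz hadj
      rw [← SimpleGraph.card_neighborFinset_eq_degree,
        ← SimpleGraph.card_neighborFinset_eq_degree, hN4u,
        Finset.card_insert_of_notMem hznm, Finset.card_erase_of_mem hv₂mem]
      omega
    by_cases h3 : y = w₁
    · subst h3
      have hw₂mem : w₂ ∈ H₃.neighborFinset y := by
        rw [SimpleGraph.mem_neighborFinset]; exact hadjw
      have hcard : 1 ≤ (H₃.neighborFinset y).card := Finset.card_pos.mpr ⟨w₂, hw₂mem⟩
      have hv₂nm : v₂ ∉ (H₃.neighborFinset y).erase w₂ := by
        simp only [Finset.mem_erase, SimpleGraph.mem_neighborFinset]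
        rintro ⟨-, hadj⟩
        exact hnadjv₂w₁ hadj.symm
      rw [← SimpleGraph.card_neighborFinset_eq_degree,
        ← SimpleGraph.card_neighborFinset_eq_degree, hN4w₁,
        Finset.card_insert_of_notMem hv₂nm, Finset.card_erase_of_mem hw₂mem]
      omega
    by_cases h4 : y = w₂
    · subst h4
      have hw₁mem : w₁ ∈ H₃.neighborFinset y := by
        rw [SimpleGraph.mem_neighborFinset]; exact hadjw.symm
      have hcard : 1 ≤ (H₃.neighborFinset y).card := Finset.card_pos.mpr ⟨w₁, hw₁mem⟩
      have hv₂nm : v₂ ∉ (H₃.neighborFinset y).erase w₁ := by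
        simp only [Finset.mem_erase, SimpleGraph.mem_neighborFinset]
        rintro ⟨-, hadj⟩
        exact hnadjv₂w₂ hadj.symm
      rw [← SimpleGraph.card_neighborFinset_eq_degree,
        ← SimpleGraph.card_neighborFinset_eq_degree, hN4w₂,
        Finset.card_insert_of_notMem hv₂nm, Finset.card_erase_of_mem hw₁mem]
      omega
    · rw [← SimpleGraph.card_neighborFinset_eq_degree,
        ← SimpleGraph.card_neighborFinset_eq_degree]
      congr 1
      ext t
      rw [SimpleGraph.mem_neighborFinset, SimpleGraph.mem_neighborFinset, hA4]
      constructor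
      · rintro (⟨hadj, -⟩ | h | h | h)
        · exact hadj
        · exfalso
          rcases Sym2.eq_iff.mp h with ⟨ha, -⟩ | ⟨ha, -⟩
          · exact h1 ha
          · exact h3 ha
        · exfalso
          rcases Sym2.eq_iff.mp h with ⟨ha, -⟩ | ⟨ha, -⟩
          · exact h1 ha
          · exact h4 ha
        · exfalso
          rcases Sym2.eq_iff.mp h with ⟨ha, -⟩ | ⟨ha, -⟩
          · exact h2 ha
          · exact hyz ha
      · intro hadj
        left
        refine ⟨hadj, ?_, ?_, ?_⟩
        · intro hEq
          rcases Sym2.eq_iff.mp hEq with ⟨ha, -⟩ | ⟨ha, -⟩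
          · exact hyv ha
          · exact h1 ha
        · intro hEq
          rcases Sym2.eq_iff.mp hEq with ⟨ha, -⟩ | ⟨ha, -⟩
          · exact h2 ha
          · exact h1 ha
        · intro hEq
          rcases Sym2.eq_iff.mp hEq with ⟨ha, -⟩ | ⟨ha, -⟩
          · exact h3 ha
          · exact h4 ha
  -- edge collections
  have he₁₂ : (s(v,v₂) : Sym2 V) ≠ s(u,v₂) := by
    intro h
    rcases Sym2.eq_iff.mp h with ⟨h1, -⟩ | ⟨h1, -⟩
    · exact hvu h1
    · exact hvv₂ h1
  have he₁₃ : (s(v,v₂) : Sym2 V) ≠ s(w₁,w₂) := by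
    intro h
    rcases Sym2.eq_iff.mp h with ⟨h1, -⟩ | ⟨h1, -⟩
    · exact hw₁v h1.symm
    · exact hw₂v h1.symm
  have he₂₃ : (s(u,v₂) : Sym2 V) ≠ s(w₁,w₂) := by
    intro h
    rcases Sym2.eq_iff.mp h with ⟨h1, -⟩ | ⟨h1, -⟩
    · exact hw₁u h1.symm
    · exact hw₂u h1.symm
  have hf₁₂ : (s(v₂,w₁) : Sym2 V) ≠ s(v₂,w₂) := by
    intro h
    rcases Sym2.eq_iff.mp h with ⟨-, h2⟩ | ⟨h1, -⟩
    · exact hw₁w₂ h2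
    · exact hw₂v₂ h1.symm
  have hf₁₃ : (s(v₂,w₁) : Sym2 V) ≠ s(u,z) := by
    intro h
    rcases Sym2.eq_iff.mp h with ⟨h1, -⟩ | ⟨h1, -⟩
    · exact hv₂u h1
    · exact hv₂z h1
  have hf₂₃ : (s(v₂,w₂) : Sym2 V) ≠ s(u,z) := by
    intro h
    rcases Sym2.eq_iff.mp h with ⟨h1, -⟩ | ⟨h1, -⟩
    · exact hv₂u h1
    · exact hv₂z h1
  have hsubE : ({s(v,v₂), s(u,v₂), s(w₁,w₂)} : Finset (Sym2 V)) ⊆ H₃.edgeFinset := by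
    intro e he
    rw [Finset.mem_insert, Finset.mem_insert, Finset.mem_singleton] at he
    rcases he with rfl | rfl | rfl
    · exact SimpleGraph.mem_edgeFinset.mpr (H₃.mem_edgeSet.mpr hadjvv₂)
    · exact SimpleGraph.mem_edgeFinset.mpr (H₃.mem_edgeSet.mpr hadjv₂u.symm)
    · exact SimpleGraph.mem_edgeFinset.mpr (H₃.mem_edgeSet.mpr hadjw)
  have hf₁E : (s(v₂,w₁) : Sym2 V) ∉ H₃.edgeFinset := by
    rw [SimpleGraph.mem_edgeFinset, SimpleGraph.mem_edgeSet]
    exact hnadjv₂w₁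
  have hf₂E : (s(v₂,w₂) : Sym2 V) ∉ H₃.edgeFinset := by
    rw [SimpleGraph.mem_edgeFinset, SimpleGraph.mem_edgeSet]
    exact hnadjv₂w₂
  have hf₃E : (s(u,z) : Sym2 V) ∉ H₃.edgeFinset := by
    rw [SimpleGraph.mem_edgeFinset, SimpleGraph.mem_edgeSet]
    exact hnadjuz
  obtain ⟨E', hE'⟩ : ∃ E : Finset (Sym2 V),
      E = H₃.edgeFinset \ {s(v,v₂), s(u,v₂), s(w₁,w₂)} := ⟨_, rfl⟩
  have hEF₄ : H₄.edgeFinset = E' ∪ {s(v₂,w₁), s(v₂,w₂), s(u,z)} := by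
    rw [hE']
    ext e
    rw [Finset.mem_union, Finset.mem_sdiff, SimpleGraph.mem_edgeFinset,
      SimpleGraph.mem_edgeFinset, hE₄]
    simp only [Set.mem_union, Set.mem_diff, Set.mem_insert_iff, Set.mem_singleton_iff,
      Finset.mem_insert, Finset.mem_singleton]
  -- the weight functions
  obtain ⟨F₃, hzag₃, hF₃⟩ : ∃ F : Sym2 V → ℕ,
      zagrebM2 H₃ = ∑ e ∈ H₃.edgeFinset, F e ∧
        ∀ a b : V, F s(a,b) = H₃.degree a * H₃.degree b :=
    ⟨_, rfl, fun a b => Sym2.lift_mk _ _ _⟩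
  obtain ⟨F₄, hzag₄, hF₄⟩ : ∃ F : Sym2 V → ℕ,
      zagrebM2 H₄ = ∑ e ∈ H₄.edgeFinset, F e ∧
        ∀ a b : V, F s(a,b) = H₄.degree a * H₄.degree b :=
    ⟨_, rfl, fun a b => Sym2.lift_mk _ _ _⟩
  -- sum splittings
  have hsum₃ : zagrebM2 H₃ = (∑ e ∈ E', F₃ e)
      + (F₃ s(v,v₂) + F₃ s(u,v₂) + F₃ s(w₁,w₂)) := by
    rw [hzag₃, ← Finset.sum_sdiff hsubE, ← hE']
    congr 1
    rw [Finset.sum_insert (by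
        rw [Finset.mem_insert, Finset.mem_singleton]
        rintro (h | h)
        · exact he₁₂ h
        · exact he₁₃ h),
      Finset.sum_insert (by rw [Finset.mem_singleton]; exact he₂₃),
      Finset.sum_singleton, Nat.add_assoc]
  have hdisj : Disjoint E' ({s(v₂,w₁), s(v₂,w₂), s(u,z)} : Finset (Sym2 V)) := by
    rw [Finset.disjoint_left]
    intro e he hef
    rw [hE', Finset.mem_sdiff] at he
    rw [Finset.mem_insert, Finset.mem_insert, Finset.mem_singleton] at hef
    rcases hef with rfl | rfl | rfl
    · exact hf₁E he.1
    · exact hf₂E he.1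
    · exact hf₃E he.1
  have hsum₄ : zagrebM2 H₄ = (∑ e ∈ E', F₄ e)
      + (F₄ s(v₂,w₁) + F₄ s(v₂,w₂) + F₄ s(u,z)) := by
    rw [hzag₄, hEF₄, Finset.sum_union hdisj]
    congr 1
    rw [Finset.sum_insert (by
        rw [Finset.mem_insert, Finset.mem_singleton]
        rintro (h | h)
        · exact hf₁₂ h
        · exact hf₁₃ h),
      Finset.sum_insert (by rw [Finset.mem_singleton]; exact hf₂₃),
      Finset.sum_singleton, Nat.add_assoc]
  -- values of the exceptional weights
  have hval₃ : F₃ s(v,v₂) + F₃ s(u,v₂) + F₃ s(w₁,w₂)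
      = H₃.degree v * 2 + H₃.degree u * 2 + H₃.degree w₁ * H₃.degree w₂ := by
    rw [hF₃, hF₃, hF₃, hdv₂]
  have h42 : H₄.degree v₂ = 2 := by rw [hd4 v₂ hvv₂.symm hv₂z, hdv₂]
  have hval₄ : F₄ s(v₂,w₁) + F₄ s(v₂,w₂) + F₄ s(u,z)
      = 2 * H₃.degree w₁ + 2 * H₃.degree w₂ + H₃.degree u * 2 := by
    rw [hF₄, hF₄, hF₄, h42, hd4 w₁ hw₁v hw₁z, hd4 w₂ hw₂v hw₂z, hd4 u hvu.symm huz, hd4z]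
  -- the correction function g
  obtain ⟨g, hg_ez, hg_ev, hg0⟩ : ∃ g : Sym2 V → ℤ,
      g s(z,z') = 2 ∧ g s(v,vq) = -2 ∧
        ∀ e, e ≠ s(z,z') → e ≠ s(v,vq) → g e = 0 := by
    refine ⟨fun e => if e = s(z,z') then 2 else if e = s(v,vq) then -2 else 0, by simp, ?_, ?_⟩
    · have hne : (s(v,vq) : Sym2 V) ≠ s(z,z') := by
        intro h
        rcases Sym2.eq_iff.mp h with ⟨h1, -⟩ | ⟨h1, -⟩
        · exact hvz h1
        · exact hvz' h1
      simp [hne]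
    · intro e h1 h2
      simp [h1, h2]
  have hezE : (s(z,z') : Sym2 V) ∈ E' := by
    rw [hE', Finset.mem_sdiff]
    refine ⟨SimpleGraph.mem_edgeFinset.mpr (H₃.mem_edgeSet.mpr hadjz'z.symm), ?_⟩
    rw [Finset.mem_insert, Finset.mem_insert, Finset.mem_singleton]
    rintro (h | h | h)
    · rcases Sym2.eq_iff.mp h with ⟨h1, -⟩ | ⟨h1, -⟩
      · exact hvz h1.symm
      · exact hv₂z h1.symm
    · rcases Sym2.eq_iff.mp h with ⟨h1, -⟩ | ⟨h1, -⟩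
      · exact huz h1.symm
      · exact hv₂z h1.symm
    · rcases Sym2.eq_iff.mp h with ⟨h1, -⟩ | ⟨h1, -⟩
      · exact hw₁z h1.symm
      · exact hw₂z h1.symm
  have hevE : (s(v,vq) : Sym2 V) ∈ E' := by
    rw [hE', Finset.mem_sdiff]
    refine ⟨SimpleGraph.mem_edgeFinset.mpr (H₃.mem_edgeSet.mpr hadjvvq), ?_⟩
    rw [Finset.mem_insert, Finset.mem_insert, Finset.mem_singleton]
    rintro (h | h | h)
    · rcases Sym2.eq_iff.mp h with ⟨-, h2⟩ | ⟨h1, -⟩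
      · exact hv₂vq h2.symm
      · exact hvv₂ h1
    · rcases Sym2.eq_iff.mp h with ⟨h1, -⟩ | ⟨h1, -⟩
      · exact hvu h1
      · exact hvv₂ h1
    · rcases Sym2.eq_iff.mp h with ⟨h1, -⟩ | ⟨h1, -⟩
      · exact hw₁v h1.symm
      · exact hw₂v h1.symm
  have hezev : (s(z,z') : Sym2 V) ≠ s(v,vq) := by
    intro h
    rcases Sym2.eq_iff.mp h with ⟨h1, -⟩ | ⟨h1, -⟩
    · exact hvz h1.symm
    · exact hvqz h1.symm
  have hgsum : ∑ e ∈ E', g e = 0 := by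
    have hsub2 : ({s(z,z'), s(v,vq)} : Finset (Sym2 V)) ⊆ E' := by
      intro e he
      rw [Finset.mem_insert, Finset.mem_singleton] at he
      rcases he with rfl | rfl
      · exact hezE
      · exact hevE
    have h0 : ∀ e ∈ E', e ∉ ({s(z,z'), s(v,vq)} : Finset (Sym2 V)) → g e = 0 := by
      intro e _ henot
      rw [Finset.mem_insert, Finset.mem_singleton] at henot
      push_neg at henot
      exact hg0 e henot.1 henot.2
    rw [← Finset.sum_subset hsub2 h0,
      Finset.sum_insert (by rw [Finset.mem_singleton]; exact hezev),
      Finset.sum_singleton, hg_ez, hg_ev]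
    norm_num
  -- per-edge bound
  have keyv : ∀ b, H₃.Adj v b → b ≠ v₂ →
      (F₄ s(v,b) : ℤ) ≤ (F₃ s(v,b) : ℤ) + g s(v,b) := by
    intro b hb hbv₂
    have hbz : b ≠ z := by rintro rfl; exact hnadjvz hb
    have hd4b : H₄.degree b = H₃.degree b := hd4 b hb.ne' hbz
    have hnez : (s(v,b) : Sym2 V) ≠ s(z,z') := by
      intro h
      rcases Sym2.eq_iff.mp h with ⟨h1, -⟩ | ⟨h1, -⟩
      · exact hvz h1
      · exact hvz' h1
    have hF4' : (F₄ s(v,b) : ℤ) = ((H₃.degree v : ℤ) - 1) * (H₃.degree b : ℤ) := by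
      rw [hF₄, hd4b]
      push_cast
      rw [hd4v]
    by_cases hbvq : b = vq
    · subst hbvq
      rw [hF4', hF₃, hg_ev, hdvq]
      push_cast
      exact le_of_eq (by ring)
    · have hnev : (s(v,b) : Sym2 V) ≠ s(v,vq) := by
        intro h
        rcases Sym2.eq_iff.mp h with ⟨-, h2⟩ | ⟨h1, -⟩
        · exact hbvq h2
        · exact hvvq h1
      rw [hF4', hF₃, hg0 _ hnez hnev]
      push_cast
      have hb0 : (0:ℤ) ≤ (H₃.degree b : ℤ) := by positivity
      rw [add_zero]
      exact mul_le_mul_of_nonneg_right (sub_le_self _ zero_le_one) hb0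
  have keyz : ∀ b, H₃.Adj z b →
      (F₄ s(z,b) : ℤ) ≤ (F₃ s(z,b) : ℤ) + g s(z,b) := by
    intro b hb
    have hbz' : b = z' := (hNz' b).mp hb
    rw [hbz']
    have hd4z' : H₄.degree z' = H₃.degree z' := hd4 z' hvz'.symm hz'z
    rw [hF₄, hF₃, hg_ez, hd4z, hd4z', hdz', hqz]
    norm_num
  have keyo : ∀ a b, H₃.Adj a b → a ≠ v → a ≠ z → b ≠ v → b ≠ z →
      (F₄ s(a,b) : ℤ) ≤ (F₃ s(a,b) : ℤ) + g s(a,b) := by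
    intro a b hab hav haz hbv hbz
    have h1 : (s(a,b) : Sym2 V) ≠ s(z,z') := by
      intro h
      rcases Sym2.eq_iff.mp h with ⟨h1, -⟩ | ⟨-, h2⟩
      · exact haz h1
      · exact hbz h2
    have h2 : (s(a,b) : Sym2 V) ≠ s(v,vq) := by
      intro h
      rcases Sym2.eq_iff.mp h with ⟨h1, -⟩ | ⟨-, h2⟩
      · exact hav h1
      · exact hbv h2
    rw [hF₄, hF₃, hg0 _ h1 h2, hd4 a hav haz, hd4 b hbv hbz, add_zero]
  have main : ∀ e : Sym2 V, e ∈ H₃.edgeFinset → e ≠ s(v,v₂) →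
      (F₄ e : ℤ) ≤ (F₃ e : ℤ) + g e := by
    intro e
    induction e using Sym2.ind with
    | _ a b =>
      intro heF hne
      have hab : H₃.Adj a b := H₃.mem_edgeSet.mp (SimpleGraph.mem_edgeFinset.mp heF)
      by_cases hav : a = v
      · subst hav
        refine keyv b hab ?_
        rintro rfl
        exact hne rfl
      by_cases hbv : b = v
      · rw [hbv] at hab ⊢
        rw [show (s(a,v) : Sym2 V) = s(v,a) from Sym2.eq_swap]
        refine keyv a hab.symm ?_
        rintro rfl
        exact hne (by rw [hbv]; exact Sym2.eq_swap)
      by_cases haz : a = z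
      · subst haz
        exact keyz b hab
      by_cases hbz : b = z
      · rw [hbz] at hab ⊢
        rw [show (s(a,z) : Sym2 V) = s(z,a) from Sym2.eq_swap]
        exact keyz a hab.symm
      · exact keyo a b hab hav haz hbv hbz
  have hbound : ∀ e ∈ E', (F₄ e : ℤ) ≤ (F₃ e : ℤ) + g e := by
    intro e he
    rw [hE', Finset.mem_sdiff] at he
    refine main e he.1 ?_
    intro hEq
    apply he.2
    rw [Finset.mem_insert]
    exact Or.inl hEq
  have hsumle : (∑ e ∈ E', (F₄ e : ℤ)) ≤ ∑ e ∈ E', (F₃ e : ℤ) := by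
    calc (∑ e ∈ E', (F₄ e : ℤ)) ≤ ∑ e ∈ E', ((F₃ e : ℤ) + g e) := Finset.sum_le_sum hbound
      _ = (∑ e ∈ E', (F₃ e : ℤ)) + ∑ e ∈ E', g e := Finset.sum_add_distrib
      _ = ∑ e ∈ E', (F₃ e : ℤ) := by rw [hgsum, add_zero]
  -- final arithmetic
  have hcast₃ : (zagrebM2 H₃ : ℤ) = (∑ e ∈ E', (F₃ e : ℤ))
      + ((H₃.degree v : ℤ) * 2 + (H₃.degree u : ℤ) * 2
        + (H₃.degree w₁ : ℤ) * (H₃.degree w₂ : ℤ)) := by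
    rw [hsum₃, hval₃]
    push_cast
    ring
  have hcast₄ : (zagrebM2 H₄ : ℤ) = (∑ e ∈ E', (F₄ e : ℤ))
      + (2 * (H₃.degree w₁ : ℤ) + 2 * (H₃.degree w₂ : ℤ) + (H₃.degree u : ℤ) * 2) := by
    rw [hsum₄, hval₄]
    push_cast
    ring
  have h1 : (2:ℤ) ≤ (H₃.degree w₁ : ℤ) := by exact_mod_cast hdw₁
  have h2 : (2:ℤ) ≤ (H₃.degree w₂ : ℤ) := by exact_mod_cast hdw₂
  have h3 : (3:ℤ) ≤ (H₃.degree v : ℤ) := by exact_mod_cast hdeg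
  have hfinal : (zagrebM2 H₄ : ℤ) < (zagrebM2 H₃ : ℤ) := by
    rw [hcast₃, hcast₄]
    exact arith_final hsumle h1 h2 h3
  exact_mod_cast hfinal
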